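/- Let H be a k-uniform hypergraph on {1,…,n} with m edges and minimum degree δ. Then every eigenvalue λ of the adjacency tensor A(H) satisfies |λ| ≤ ( δ − C(n−1, k−1) + ((n−2)/(k−1))·C(n−2, k−2) + √( ( δ + (n/(k−1))·C(n−2, k−2) − C(n−1, k−1) )² + (4/(k−1))·C(n−2, k−2)·(k·m − n·δ) ) ) / 2. -/

import Mathlib

open Finset

/-- A complex number `lam` is an *eigenvalue* of the order-`k`, dimension-`n` tensor `T`
(whose entry `t_{i i₂ … i_k}` is represented as `T i f` with `f = (i₂, …, i_k)`)
if there is a nonzero vector `x : Fin n → ℂ` with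
`∑_{i₂,…,i_k} t_{i i₂ … i_k} x_{i₂} ⋯ x_{i_k} = lam · x_i^{k−1}` for every `i`. -/
def IsTensorEigenvalue (n k : ℕ) (T : Fin n → (Fin (k - 1) → Fin n) → ℂ) (lam : ℂ) : Prop :=
  ∃ x : Fin n → ℂ, x ≠ 0 ∧ ∀ i : Fin n,
    ∑ f : Fin (k - 1) → Fin n, T i f * ∏ j, x (f j) = lam * x i ^ (k - 1)

/-- The degree of vertex `i` in the hypergraph with edge set `E`:
the number of edges containing `i`. -/
def hdegree (n : ℕ) (E : Finset (Finset (Fin n))) (i : Fin n) : ℕ :=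
  (E.filter (fun e => i ∈ e)).card

open Classical in
/-- The adjacency tensor of a `k`-uniform hypergraph on `{1,…,n}` with edge set `E`:
the entry `a_{i i₂ … i_k}` equals `1/(k−1)!` if `i, i₂, …, i_k` are distinct and
`{i, i₂, …, i_k} ∈ E`, and `0` otherwise. -/
noncomputable def adjTensor (n k : ℕ) (E : Finset (Finset (Fin n))) :
    Fin n → (Fin (k - 1) → Fin n) → ℝ := fun i f =>
  if Function.Injective f ∧ i ∉ Finset.image f Finset.univ ∧
      insert i (Finset.image f Finset.univ) ∈ E then
    1 / (Nat.factorial (k - 1) : ℝ)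
  else 0

open Classical in
/-- The signless Laplacian tensor `Q(H) = D(H) + A(H)` of a `k`-uniform hypergraph:
`D(H)` is the diagonal tensor whose `(i,…,i)` entry is the degree `d_i`. -/
noncomputable def signlessLapTensor (n k : ℕ) (E : Finset (Finset (Fin n))) :
    Fin n → (Fin (k - 1) → Fin n) → ℝ := fun i f =>
  (if ∀ j, f j = i then (hdegree n E i : ℝ) else 0) + adjTensor n k E i f

/-! ### Auxiliary lemmas -/

lemma amgm (K : ℕ) (hK : 1 ≤ K) (z : Fin K → ℝ) (hz : ∀ j, 0 ≤ z j) :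
    ∏ j, z j ≤ (K : ℝ)⁻¹ * ∑ j, z j ^ K := by
  have hK0 : (K : ℝ) ≠ 0 := Nat.cast_ne_zero.2 (by omega)
  have h := Real.geom_mean_le_arith_mean_weighted (univ : Finset (Fin K))
    (fun _ => (K : ℝ)⁻¹) (fun j => z j ^ K)
    (fun i _ => by positivity) (by simp [Finset.card_univ, hK0])
    (fun i _ => pow_nonneg (hz i) K)
  have hprod : ∀ j : Fin K, ((z j ^ K : ℝ)) ^ ((K : ℝ)⁻¹) = z j := by
    intro j
    rw [← Real.rpow_natCast (z j) K, ← Real.rpow_mul (hz j), mul_inv_cancel₀ hK0,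
      Real.rpow_one]
  calc ∏ j, z j = ∏ j, ((z j ^ K : ℝ)) ^ ((K : ℝ)⁻¹) := by
        exact (Finset.prod_congr rfl fun j _ => (hprod j)).symm
    _ ≤ ∑ j, (K : ℝ)⁻¹ * z j ^ K := h
    _ = (K : ℝ)⁻¹ * ∑ j, z j ^ K := by rw [Finset.mul_sum]

lemma card_inj_image_le (n K : ℕ) (s : Finset (Fin n))
    [∀ f : Fin K → Fin n, Decidable (Function.Injective f ∧ Finset.image f univ = s)] :
    ((univ : Finset (Fin K → Fin n)).filter
      (fun f => Function.Injective f ∧ Finset.image f univ = s)).card ≤ Nat.factorial K := by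
  classical
  set F := (univ : Finset (Fin K → Fin n)).filter
      (fun f => Function.Injective f ∧ Finset.image f univ = s) with hF
  rcases F.eq_empty_or_nonempty with h | ⟨f₀, hf₀⟩
  · simp [h, Nat.factorial_pos K |>.le]
  · have hf₀' := Finset.mem_filter.1 hf₀
    have hs : s.card = K := by
      rw [← hf₀'.2.2, Finset.card_image_of_injective _ hf₀'.2.1, Finset.card_univ,
        Fintype.card_fin]
    have hmem : ∀ f ∈ F, ∀ j : Fin K, f j ∈ s := by
      intro f hf j
      have := (Finset.mem_filter.1 hf).2.2
      rw [← this]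
      exact Finset.mem_image_of_mem f (Finset.mem_univ j)
    have e0 : (Fin K ↪ {u // u ∈ s}) :=
      ⟨fun j => ⟨f₀ j, hmem f₀ hf₀ j⟩,
        fun a b hab => hf₀'.2.1 (congrArg Subtype.val hab)⟩
    have : F.card ≤ (univ : Finset (Fin K ↪ {u // u ∈ s})).card := by
      apply Finset.card_le_card_of_injOn
        (fun f => if hf : f ∈ F then
          (⟨fun j => ⟨f j, hmem f hf j⟩,
            fun a b hab => (Finset.mem_filter.1 hf).2.1 (congrArg Subtype.val hab)⟩ :
              Fin K ↪ {u // u ∈ s})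
          else e0)
      · intro f hf; exact Finset.mem_univ _
      · intro f hf g hg hfg
        simp only at hfg
        rw [dif_pos (Finset.mem_coe.1 hf), dif_pos (Finset.mem_coe.1 hg)] at hfg
        funext j
        have := congrArg (fun e : Fin K ↪ {u // u ∈ s} => (e j : Fin n)) hfg
        exact this
    calc F.card ≤ _ := this
      _ = Nat.factorial K := by
        rw [Finset.card_univ, Fintype.card_embedding_eq]
        simp [Fintype.card_coe, hs, Nat.descFactorial_self]

lemma card_good_with_mem_le (n k : ℕ) (E : Finset (Finset (Fin n))) (v u : Fin n)
    [∀ f : Fin (k-1) → Fin n, Decidable ((Function.Injective f ∧ v ∉ Finset.image f univ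
          ∧ insert v (Finset.image f univ) ∈ E)
        ∧ u ∈ Finset.image f univ)]
    [∀ e : Finset (Fin n), Decidable (v ∈ e ∧ u ∈ e)] :
    ((univ : Finset (Fin (k-1) → Fin n)).filter
      (fun f => (Function.Injective f ∧ v ∉ Finset.image f univ
          ∧ insert v (Finset.image f univ) ∈ E)
        ∧ u ∈ Finset.image f univ)).card
    ≤ Nat.factorial (k-1) * (E.filter (fun e => v ∈ e ∧ u ∈ e)).card := by
  classical
  apply Finset.card_le_mul_card_image_of_maps_to
    (f := fun f : Fin (k-1) → Fin n => insert v (Finset.image f univ))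
  · intro f hf
    obtain ⟨-, ⟨hinj, hv, hE⟩, hu⟩ := Finset.mem_filter.1 hf
    exact Finset.mem_filter.2 ⟨hE, Finset.mem_insert_self _ _, Finset.mem_insert_of_mem hu⟩
  · intro e he
    calc _ ≤ ((univ : Finset (Fin (k-1) → Fin n)).filter
        (fun f => Function.Injective f ∧ Finset.image f univ = e.erase v)).card := by
          apply Finset.card_le_card
          intro f hf
          simp only [Finset.mem_filter] at hf ⊢
          obtain ⟨⟨-, ⟨hinj, hv, -⟩, -⟩, heq⟩ := hf
          refine ⟨Finset.mem_univ _, hinj, ?_⟩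
          rw [← heq, Finset.erase_insert hv]
      _ ≤ Nat.factorial (k-1) := card_inj_image_le n (k-1) _

lemma sum_hdegree (n k : ℕ) (E : Finset (Finset (Fin n)))
    (huniform : ∀ e ∈ E, e.card = k) :
    ∑ v : Fin n, hdegree n E v = k * E.card := by
  classical
  unfold hdegree
  simp only [Finset.card_filter]
  rw [Finset.sum_comm]
  rw [Finset.sum_congr rfl (fun e he => ?_)]
  · rw [Finset.sum_const, smul_eq_mul, mul_comm]
  · calc (∑ v : Fin n, if v ∈ e then 1 else 0) = e.card := by
          rw [Finset.sum_boole]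
          simp [Finset.filter_mem_eq_inter]
      _ = k := huniform e he

lemma sum_d2 (n k : ℕ) (E : Finset (Finset (Fin n)))
    [∀ v u : Fin n, ∀ e : Finset (Fin n), Decidable (v ∈ e ∧ u ∈ e)]
    (huniform : ∀ e ∈ E, e.card = k) (v : Fin n) :
    ∑ u ∈ univ.erase v, (E.filter (fun e => v ∈ e ∧ u ∈ e)).card
      = (k - 1) * hdegree n E v := by
  classical
  simp only [Finset.card_filter]
  rw [Finset.sum_comm]
  unfold hdegree
  rw [Finset.card_filter, Finset.mul_sum]
  refine Finset.sum_congr rfl (fun e he => ?_)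
  by_cases hv : v ∈ e
  · simp only [hv, true_and, if_true, mul_one]
    calc (∑ u ∈ univ.erase v, if u ∈ e then 1 else 0)
        = ((univ.erase v).filter (fun u => u ∈ e)).card := (Finset.card_filter _ _).symm
      _ = (e.erase v).card := by
          congr 1
          ext u
          simp only [Finset.mem_filter, Finset.mem_erase, Finset.mem_univ, true_and,
            and_comm]
      _ = k - 1 := by rw [Finset.card_erase_of_mem hv, huniform e he]
  · simp [hv]

lemma d2_le (n k : ℕ) (E : Finset (Finset (Fin n)))
    (huniform : ∀ e ∈ E, e.card = k) (v u : Fin n) (huv : u ≠ v)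
    [∀ e : Finset (Fin n), Decidable (v ∈ e ∧ u ∈ e)] :
    (E.filter (fun e => v ∈ e ∧ u ∈ e)).card ≤ (n - 2).choose (k - 2) := by
  classical
  have hmaps : ∀ e ∈ E.filter (fun e => v ∈ e ∧ u ∈ e),
      (e.erase v).erase u ∈ Finset.powersetCard (k - 2) ((univ.erase v).erase u) := by
    intro e he
    obtain ⟨heE, hv, hu⟩ := Finset.mem_filter.1 he
    refine Finset.mem_powersetCard.2 ⟨?_, ?_⟩
    · intro w hw
      have h1 := Finset.mem_erase.1 hw
      have h2 := Finset.mem_erase.1 h1.2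
      exact Finset.mem_erase.2 ⟨h1.1, Finset.mem_erase.2 ⟨h2.1, Finset.mem_univ w⟩⟩
    · rw [Finset.card_erase_of_mem (Finset.mem_erase.2 ⟨huv, hu⟩),
        Finset.card_erase_of_mem hv, huniform e heE]
      omega
  have hinj : ∀ e₁ ∈ E.filter (fun e => v ∈ e ∧ u ∈ e),
      ∀ e₂ ∈ E.filter (fun e => v ∈ e ∧ u ∈ e),
      (e₁.erase v).erase u = (e₂.erase v).erase u → e₁ = e₂ := by
    intro e₁ h₁ e₂ h₂ heq
    obtain ⟨-, hv₁, hu₁⟩ := Finset.mem_filter.1 h₁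
    obtain ⟨-, hv₂, hu₂⟩ := Finset.mem_filter.1 h₂
    have : insert v (insert u ((e₁.erase v).erase u))
        = insert v (insert u ((e₂.erase v).erase u)) := by rw [heq]
    rwa [Finset.insert_erase (Finset.mem_erase.2 ⟨huv, hu₁⟩), Finset.insert_erase hv₁,
      Finset.insert_erase (Finset.mem_erase.2 ⟨huv, hu₂⟩), Finset.insert_erase hv₂] at this
  calc (E.filter (fun e => v ∈ e ∧ u ∈ e)).card
      ≤ (Finset.powersetCard (k - 2) ((univ.erase v).erase u)).card :=
        Finset.card_le_card_of_injOn _ hmaps (fun e₁ h₁ e₂ h₂ => hinj e₁ h₁ e₂ h₂)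
    _ = (n - 2).choose (k - 2) := by
        rw [Finset.card_powersetCard, Finset.card_erase_of_mem
          (Finset.mem_erase.2 ⟨huv, Finset.mem_univ u⟩), Finset.card_erase_of_mem
          (Finset.mem_univ v), Finset.card_univ, Fintype.card_fin]
        congr 1

lemma d2_symm (n : ℕ) (E : Finset (Finset (Fin n))) (v u : Fin n)
    [∀ e : Finset (Fin n), Decidable (v ∈ e ∧ u ∈ e)]
    [∀ e : Finset (Fin n), Decidable (u ∈ e ∧ v ∈ e)] :
    (E.filter (fun e => v ∈ e ∧ u ∈ e)).card = (E.filter (fun e => u ∈ e ∧ v ∈ e)).card := by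
  congr 1
  apply Finset.filter_congr
  intro e he
  exact and_comm

lemma eigen_ineq (n k : ℕ) (hk : 2 ≤ k) (E : Finset (Finset (Fin n)))
    [∀ v u : Fin n, ∀ e : Finset (Fin n), Decidable (v ∈ e ∧ u ∈ e)]
    (lam : ℂ) (x : Fin n → ℂ)
    (hx : ∀ i : Fin n, ∑ f : Fin (k-1) → Fin n,
        ((adjTensor n k E i f : ℝ) : ℂ) * ∏ j, x (f j) = lam * x i ^ (k-1)) (v : Fin n) :
    ‖lam‖ * ‖x v‖ ^ (k-1) ≤
      (((k:ℕ) - 1 : ℕ) : ℝ)⁻¹ * ∑ u ∈ univ.erase v,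
        ((E.filter (fun e => v ∈ e ∧ u ∈ e)).card : ℝ) * ‖x u‖ ^ (k-1) := by
  classical
  set K := k - 1 with hKdef
  have hK : 1 ≤ K := by omega
  set y : Fin n → ℝ := fun u => ‖x u‖ ^ K with hy
  have hy0 : ∀ u, 0 ≤ y u := fun u => pow_nonneg (norm_nonneg _) _
  set Good : (Fin K → Fin n) → Prop := fun f =>
    Function.Injective f ∧ v ∉ Finset.image f univ ∧ insert v (Finset.image f univ) ∈ E
    with hGood
  have step1 : ‖lam‖ * y v ≤
      ∑ f : Fin K → Fin n, adjTensor n k E v f * ∏ j, ‖x (f j)‖ := by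
    calc ‖lam‖ * y v = ‖lam * x v ^ K‖ := by
          rw [norm_mul, norm_pow]
      _ = ‖∑ f : Fin K → Fin n,
            ((adjTensor n k E v f : ℝ) : ℂ) * ∏ j, x (f j)‖ := by rw [hx v]
      _ ≤ ∑ f : Fin K → Fin n,
            ‖((adjTensor n k E v f : ℝ) : ℂ) * ∏ j, x (f j)‖ :=
          norm_sum_le _ _
      _ = ∑ f : Fin K → Fin n, adjTensor n k E v f * ∏ j, ‖x (f j)‖ := by
          refine Finset.sum_congr rfl (fun f _ => ?_)
          rw [norm_mul, norm_prod, Complex.norm_real, Real.norm_eq_abs, abs_of_nonneg]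
          unfold adjTensor
          split
          · positivity
          · exact le_refl 0
  have step2 : ∑ f : Fin K → Fin n, adjTensor n k E v f * ∏ j, ‖x (f j)‖
      ≤ (Nat.factorial K : ℝ)⁻¹ * (K : ℝ)⁻¹ *
        ∑ f ∈ (univ : Finset (Fin K → Fin n)).filter Good, ∑ j, y (f j) := by
    rw [Finset.mul_sum]
    rw [← Finset.sum_filter_add_sum_filter_not (univ : Finset (Fin K → Fin n)) Good]
    have hbad : ∑ f ∈ (univ : Finset (Fin K → Fin n)).filter (fun f => ¬ Good f),
        adjTensor n k E v f * ∏ j, ‖x (f j)‖ = 0 := by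
      refine Finset.sum_eq_zero (fun f hf => ?_)
      have := (Finset.mem_filter.1 hf).2
      unfold adjTensor
      rw [if_neg this, zero_mul]
    rw [hbad, add_zero]
    refine Finset.sum_le_sum (fun f hf => ?_)
    have hgood := (Finset.mem_filter.1 hf).2
    have hadj : adjTensor n k E v f = (Nat.factorial K : ℝ)⁻¹ := by
      unfold adjTensor
      rw [if_pos hgood, one_div]
    rw [hadj, mul_assoc]
    refine mul_le_mul_of_nonneg_left ?_ (by positivity)
    exact amgm K hK (fun j => ‖x (f j)‖) (fun j => norm_nonneg _)
  have step3 : ∑ f ∈ (univ : Finset (Fin K → Fin n)).filter Good, ∑ j, y (f j)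
      = ∑ u ∈ univ.erase v, (((univ : Finset (Fin K → Fin n)).filter
          (fun f => Good f ∧ u ∈ Finset.image f univ)).card : ℝ) * y u := by
    have hinner : ∀ f ∈ (univ : Finset (Fin K → Fin n)).filter Good,
        ∑ j, y (f j) = ∑ u ∈ univ.erase v, if u ∈ Finset.image f univ then y u else 0 := by
      intro f hf
      obtain ⟨hinj, hv, -⟩ := (Finset.mem_filter.1 hf).2
      have him : Finset.image f univ ⊆ univ.erase v := by
        intro u hu
        refine Finset.mem_erase.2 ⟨?_, Finset.mem_univ u⟩
        rintro rfl; exact hv hu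
      rw [Finset.sum_ite_mem, Finset.inter_comm,
        Finset.inter_eq_left.2 him, Finset.sum_image (fun a _ b _ hab => hinj hab)]
    rw [Finset.sum_congr rfl hinner, Finset.sum_comm]
    refine Finset.sum_congr rfl (fun u hu => ?_)
    rw [← Finset.sum_filter, Finset.filter_filter, Finset.sum_const, nsmul_eq_mul]
  have step4 : ∑ u ∈ univ.erase v, (((univ : Finset (Fin K → Fin n)).filter
          (fun f => Good f ∧ u ∈ Finset.image f univ)).card : ℝ) * y u
      ≤ ∑ u ∈ univ.erase v, (Nat.factorial K : ℝ) *
          ((E.filter (fun e => v ∈ e ∧ u ∈ e)).card : ℝ) * y u := by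
    refine Finset.sum_le_sum (fun u hu => ?_)
    refine mul_le_mul_of_nonneg_right ?_ (hy0 u)
    rw [← Nat.cast_mul]
    exact_mod_cast card_good_with_mem_le n k E v u
  have hKf : (Nat.factorial K : ℝ) ≠ 0 := Nat.cast_ne_zero.2 (Nat.factorial_ne_zero K)
  calc ‖lam‖ * ‖x v‖ ^ K ≤ _ := step1
    _ ≤ _ := step2
    _ = (Nat.factorial K : ℝ)⁻¹ * (K : ℝ)⁻¹ *
        ∑ u ∈ univ.erase v, (((univ : Finset (Fin K → Fin n)).filter
          (fun f => Good f ∧ u ∈ Finset.image f univ)).card : ℝ) * y u := by rw [step3]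
    _ ≤ (Nat.factorial K : ℝ)⁻¹ * (K : ℝ)⁻¹ *
        ∑ u ∈ univ.erase v, (Nat.factorial K : ℝ) *
          ((E.filter (fun e => v ∈ e ∧ u ∈ e)).card : ℝ) * y u := by
        refine mul_le_mul_of_nonneg_left step4 (by positivity)
    _ = (K : ℝ)⁻¹ * ∑ u ∈ univ.erase v,
        ((E.filter (fun e => v ∈ e ∧ u ∈ e)).card : ℝ) * y u := by
        rw [Finset.mul_sum, Finset.mul_sum]
        refine Finset.sum_congr rfl (fun u hu => ?_)
        field_simp

set_option maxHeartbeats 1000000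

/-- **Corollary 3.3.**  Let `H` be a `k`-uniform hypergraph on `{1,…,n}` with `m` edges and
minimum degree `δ`.  Then every eigenvalue `lam` of the adjacency tensor satisfies
`|lam| ≤ (δ − C(n−1,k−1) + ((n−2)/(k−1))·C(n−2,k−2)
  + √((δ + (n/(k−1))·C(n−2,k−2) − C(n−1,k−1))² + (4/(k−1))·C(n−2,k−2)·(km − nδ)))/2`. -/
theorem spectral_radius_le_of_min_degree (n k : ℕ) (hk : 2 ≤ k) (hn : k ≤ n)
    (E : Finset (Finset (Fin n))) (huniform : ∀ e ∈ E, e.card = k)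
    (m δ : ℕ) (hm : m = E.card)
    (hδ₁ : ∀ i : Fin n, δ ≤ hdegree n E i) (hδ₂ : ∃ i : Fin n, hdegree n E i = δ)
    (lam : ℂ) (hlam : IsTensorEigenvalue n k (fun i f => ((adjTensor n k E i f : ℝ) : ℂ)) lam) :
    ‖lam‖ ≤
      ((δ : ℝ) - ((n - 1).choose (k - 1) : ℝ)
          + (((n : ℝ) - 2) / ((k : ℝ) - 1)) * ((n - 2).choose (k - 2) : ℝ)
        + Real.sqrt (((δ : ℝ) + ((n : ℝ) / ((k : ℝ) - 1)) * ((n - 2).choose (k - 2) : ℝ)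
              - ((n - 1).choose (k - 1) : ℝ)) ^ 2
            + (4 / ((k : ℝ) - 1)) * ((n - 2).choose (k - 2) : ℝ)
              * ((k : ℝ) * (m : ℝ) - (n : ℝ) * (δ : ℝ)))) / 2 := by
  classical
  obtain ⟨x, hx0, hx⟩ := hlam
  have hn2 : 2 ≤ n := le_trans hk hn
  set K : ℕ := k - 1 with hKdef
  have hK1 : 1 ≤ K := by omega
  set X : ℝ := ‖lam‖ with hXdef
  set y : Fin n → ℝ := fun u => ‖x u‖ ^ K with hy
  have hy0 : ∀ u, 0 ≤ y u := fun u => pow_nonneg (norm_nonneg _) _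
  have hX0 : 0 ≤ X := norm_nonneg _
  -- max vertex
  obtain ⟨p, -, hp⟩ := Finset.exists_max_image (univ : Finset (Fin n)) y
    ⟨⟨0, by omega⟩, Finset.mem_univ _⟩
  set M : ℝ := y p with hM
  have hyM : ∀ u, y u ≤ M := fun u => hp u (Finset.mem_univ u)
  have hMpos : 0 < M := by
    obtain ⟨u, hu⟩ : ∃ u, x u ≠ 0 := by
      by_contra h; push_neg at h; exact hx0 (funext fun u => h u)
    have hyu : 0 < y u := pow_pos (norm_pos_iff.mpr hu) _
    exact lt_of_lt_of_le hyu (hyM u)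
  -- constants
  set Kr : ℝ := (K : ℝ) with hKr
  have hKr0 : (0:ℝ) < Kr := by
    rw [hKr]
    exact_mod_cast hK1
  set C2 : ℝ := ((n-2).choose (k-2) : ℝ) with hC2def
  have hC20 : 0 ≤ C2 := Nat.cast_nonneg _
  set a : ℝ := C2 / Kr with ha
  have ha0 : 0 ≤ a := div_nonneg hC20 hKr0.le
  set d2 : Fin n → Fin n → ℝ :=
    fun v u => ((E.filter (fun e => v ∈ e ∧ u ∈ e)).card : ℝ) with hd2
  set D : Fin n → ℝ := fun v => (hdegree n E v : ℝ) with hD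
  have hDδ : ∀ v, (δ:ℝ) ≤ D v := fun v => Nat.cast_le.2 (hδ₁ v)
  have hL : ∀ v, X * y v ≤ Kr⁻¹ * ∑ u ∈ univ.erase v, d2 v u * y u :=
    fun v => eigen_ineq n k hk E lam x hx v
  have hd2sym : ∀ v u, d2 v u = d2 u v := by
    intro v u
    simp only [hd2]
    exact_mod_cast d2_symm n E v u
  have hF1 : ∀ v, ∑ u ∈ univ.erase v, d2 v u = Kr * D v := by
    intro v
    have hnat := sum_d2 n k E huniform v
    rw [← hKdef] at hnat
    simp only [hd2, hD, hKr]
    exact_mod_cast hnat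
  have hd2le : ∀ v u, u ≠ v → d2 v u ≤ C2 := by
    intro v u huv
    simp only [hd2, hC2def]
    exact_mod_cast d2_le n k E huniform v u huv
  -- total degree
  have hF3 : ∑ v : Fin n, D v = (k:ℝ) * (m:ℝ) := by
    have hnat := sum_hdegree n k E huniform
    rw [hm]
    simp only [hD]
    exact_mod_cast hnat
  have hkm : (n:ℝ) * (δ:ℝ) ≤ (k:ℝ) * (m:ℝ) := by
    rw [← hF3]
    calc (n:ℝ) * (δ:ℝ) = ∑ _v : Fin n, (δ:ℝ) := by
          rw [Finset.sum_const, Finset.card_univ, Fintype.card_fin, nsmul_eq_mul]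
      _ ≤ ∑ v : Fin n, D v := Finset.sum_le_sum (fun v _ => hDδ v)
  -- Z and basic inequality (III)
  set Z : ℝ := ∑ u ∈ univ.erase p, y u with hZ
  have hZ0 : 0 ≤ Z := Finset.sum_nonneg (fun u _ => hy0 u)
  set S2 : ℝ := ∑ u ∈ univ.erase p, d2 p u * y u with hS2def
  have hLp : X * M ≤ Kr⁻¹ * S2 := hL p
  have hIII : X * M ≤ a * Z := by
    have hS2Z : S2 ≤ C2 * Z := by
      rw [hS2def, hZ, Finset.mul_sum]
      refine Finset.sum_le_sum (fun u hu => ?_)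
      exact mul_le_mul_of_nonneg_right (hd2le p u (Finset.mem_erase.1 hu).1) (hy0 u)
    calc X * M ≤ Kr⁻¹ * S2 := hLp
      _ ≤ Kr⁻¹ * (C2 * Z) := by
          exact mul_le_mul_of_nonneg_left hS2Z (by positivity)
      _ = a * Z := by rw [ha]; field_simp
  -- the key inequality (★★)
  set s : Finset (Fin n) := univ.erase p with hs
  have hps : ∀ v ∈ s, p ≠ v := fun v hv => (Finset.mem_erase.1 hv).1.symm
  set S1 : ℝ := ∑ u ∈ s, D u * y u with hS1def
  set S2' : ℝ := ∑ u ∈ s, d2 u p * y u with hS2'def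
  have hS2'S2 : S2' = S2 := by
    rw [hS2'def, hS2def]
    exact Finset.sum_congr rfl (fun u _ => by rw [hd2sym u p])
  -- X * Z ≤ Kr⁻¹ * W
  set W : ℝ := ∑ v ∈ s, ∑ u ∈ univ.erase v, d2 v u * y u with hW
  have hXZ : X * Z ≤ Kr⁻¹ * W := by
    rw [hZ, hW, Finset.mul_sum, Finset.mul_sum]
    exact Finset.sum_le_sum (fun v _ => hL v)
  -- decompose W
  have hWeq : W = (∑ v ∈ s, ∑ u ∈ s.erase v, d2 v u * y u) + Kr * D p * M := by
    rw [hW]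
    have hsplit : ∀ v ∈ s, ∑ u ∈ univ.erase v, d2 v u * y u
        = (∑ u ∈ s.erase v, d2 v u * y u) + d2 v p * M := by
      intro v hv
      have hpm : p ∈ univ.erase v := Finset.mem_erase.2 ⟨hps v hv, Finset.mem_univ p⟩
      have h1 : s.erase v = (univ.erase v).erase p := by
        rw [hs, Finset.erase_right_comm]
      rw [h1, hM]
      exact (Finset.sum_erase_add (univ.erase v) _ hpm).symm
    rw [Finset.sum_congr rfl hsplit, Finset.sum_add_distrib, ← Finset.sum_mul]
    congr 1
    rw [← hF1 p]
    congr 1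
    exact Finset.sum_congr rfl (fun v hv => by rw [hd2sym v p])
  have hT : ∑ v ∈ s, ∑ u ∈ s.erase v, d2 v u * y u = Kr * S1 - S2' := by
    have h1 : ∀ v ∈ s, ∑ u ∈ s.erase v, d2 v u * y u
        = (∑ u ∈ s, d2 v u * y u) - d2 v v * y v := by
      intro v hv
      exact eq_sub_of_add_eq (Finset.sum_erase_add s (fun u => d2 v u * y u) hv)
    rw [Finset.sum_congr rfl h1, Finset.sum_sub_distrib, Finset.sum_comm]
    have h2 : ∀ u ∈ s, ∑ v ∈ s, d2 v u * y u = ((∑ v ∈ s.erase u, d2 u v) + d2 u u) * y u := by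
      intro u hu
      rw [← Finset.sum_mul]
      congr 1
      rw [← Finset.sum_erase_add s _ hu]
      congr 1
      exact Finset.sum_congr rfl (fun v _ => hd2sym v u)
    have h3 : ∀ u ∈ s, ∑ v ∈ s.erase u, d2 u v = Kr * D u - d2 u p := by
      intro u hu
      have hpu : p ∈ univ.erase u := Finset.mem_erase.2 ⟨hps u hu, Finset.mem_univ p⟩
      have he : s.erase u = (univ.erase u).erase p := by rw [hs, Finset.erase_right_comm]
      have h4 := Finset.sum_erase_add (univ.erase u) (fun v => d2 u v) hpu
      rw [hF1 u] at h4
      rw [he]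
      exact eq_sub_of_add_eq h4
    rw [Finset.sum_congr rfl h2]
    have h5 : ∀ u ∈ s, ((∑ v ∈ s.erase u, d2 u v) + d2 u u) * y u
        = (Kr * D u - d2 u p + d2 u u) * y u := by
      intro u hu; rw [h3 u hu]
    rw [Finset.sum_congr rfl h5]
    have h6 : ∀ u ∈ s, (Kr * D u - d2 u p + d2 u u) * y u
        = Kr * (D u * y u) - d2 u p * y u + d2 u u * y u := by intro u hu; ring
    rw [Finset.sum_congr rfl h6]
    rw [hS1def, hS2'def, Finset.mul_sum]
    rw [Finset.sum_add_distrib, Finset.sum_sub_distrib]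
    ring
  -- bound S1
  have hcard_s : (s.card : ℝ) = (n:ℝ) - 1 := by
    rw [hs, Finset.card_erase_of_mem (Finset.mem_univ p), Finset.card_univ, Fintype.card_fin]
    have h1 : (1:ℕ) ≤ n := by omega
    push_cast [h1]
    ring
  have hsum_s_D : ∑ u ∈ s, D u = (k:ℝ) * (m:ℝ) - D p := by
    have h := Finset.sum_erase_add univ D (Finset.mem_univ p)
    rw [hF3] at h
    rw [hs]
    exact eq_sub_of_add_eq h
  have hS1 : S1 ≤ (δ:ℝ) * Z + ((k:ℝ)*(m:ℝ) - D p - ((n:ℝ)-1)*(δ:ℝ)) * M := by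
    have h1 : ∀ u ∈ s, D u * y u ≤ (δ:ℝ) * y u + (D u - (δ:ℝ)) * M := by
      intro u hu
      have h := mul_le_mul_of_nonneg_left (hyM u) (sub_nonneg.2 (hDδ u))
      linarith [h]
    calc S1 ≤ ∑ u ∈ s, ((δ:ℝ) * y u + (D u - (δ:ℝ)) * M) := Finset.sum_le_sum h1
      _ = (δ:ℝ) * Z + ((∑ u ∈ s, D u) - (s.card : ℝ) * (δ:ℝ)) * M := by
          rw [Finset.sum_add_distrib, ← Finset.mul_sum, ← hZ, ← Finset.sum_mul,
            Finset.sum_sub_distrib, Finset.sum_const, nsmul_eq_mul]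
      _ = (δ:ℝ) * Z + ((k:ℝ)*(m:ℝ) - D p - ((n:ℝ)-1)*(δ:ℝ)) * M := by
          rw [hsum_s_D, hcard_s]
  -- combine into (★★)
  have hKrW : Kr⁻¹ * W = S1 - Kr⁻¹ * S2 + D p * M := by
    rw [hWeq, hT, hS2'S2]
    field_simp
  have h1star : X * Z ≤ S1 - Kr⁻¹ * S2 + D p * M := by rw [← hKrW]; exact hXZ
  clear_value W S2' S1 s S2 Z D d2 a C2 Kr M y X K
  have hstar : (X - (δ:ℝ)) * Z ≤ M * ((k:ℝ)*(m:ℝ) - ((n:ℝ)-1)*(δ:ℝ) - X) := by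
    nlinarith [hLp, hS1, h1star]
  clear hx hL hLp hXZ hWeq hT hKrW h1star hS1 hS2'S2 hsum_s_D hcard_s hd2sym hF1 hd2le
    hF3 hyM hy0 hps hS1def hS2def hS2'def hW hZ hs hy hM hd2 hD hx0 hp
  clear hDδ
  clear W S1 S2 S2' s d2 D y
  clear hm huniform hδ₁ hδ₂
  clear hXdef
  clear x lam p
  -- the quadratic inequality (or the trivial case X ≤ δ)
  have hkey : X ≤ (δ:ℝ) ∨
      X * X + a * X ≤ (δ:ℝ) * X + a * ((k:ℝ)*(m:ℝ) - ((n:ℝ)-1)*(δ:ℝ)) := by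
    by_cases hXδ : X ≤ (δ:ℝ)
    · exact Or.inl hXδ
    · right
      push_neg at hXδ
      have h1 : X * M * (X - (δ:ℝ)) ≤ a * Z * (X - (δ:ℝ)) :=
        mul_le_mul_of_nonneg_right hIII (by linarith)
      have h2 : a * ((X - (δ:ℝ)) * Z) ≤ a * (M * ((k:ℝ)*(m:ℝ) - ((n:ℝ)-1)*(δ:ℝ) - X)) :=
        mul_le_mul_of_nonneg_left hstar ha0
      have h3 : M * (X * (X - (δ:ℝ))) ≤ M * (a * ((k:ℝ)*(m:ℝ) - ((n:ℝ)-1)*(δ:ℝ) - X)) := by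
        nlinarith [h1, h2]

      have h4 := (mul_le_mul_iff_right₀ hMpos).1 h3
      nlinarith [h4]

  -- the binomial identity
  have hchoose : (K : ℕ) * (n-1).choose K = (n-1) * (n-2).choose (k-2) := by
    have h1 := Nat.add_one_mul_choose_eq (n-2) (k-2)
    have h2 : n-2+1 = n - 1 := by omega
    have h3 : k-2+1 = K := by omega
    rw [h2, h3] at h1
    calc (K : ℕ) * (n-1).choose K = (n-1).choose K * K := mul_comm _ _
      _ = (n-1) * (n-2).choose (k-2) := h1.symm
  set B : ℝ := ((n-1).choose K : ℝ) with hB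
  clear_value B
  have hBid : Kr * B = ((n:ℝ) - 1) * C2 := by
    have h1 : (1:ℕ) ≤ n := by omega
    have h2 : ((n - 1 : ℕ) : ℝ) = (n:ℝ) - 1 := by push_cast [h1]; ring
    rw [hKr, hB, hC2def, ← h2]
    exact_mod_cast hchoose
  have hkK : (k:ℝ) - 1 = Kr := by
    rw [hKr, hKdef]
    have h1 : (1:ℕ) ≤ k := by omega
    push_cast [h1]
    ring
  -- rewrite the goal
  set Dd : ℝ := ((δ:ℝ) + a)^2 + 4 * a * ((k:ℝ)*(m:ℝ) - (n:ℝ)*(δ:ℝ)) with hDd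
  clear_value Dd
  have hDd0 : ((δ:ℝ) + a)^2 ≤ Dd := by
    rw [hDd]
    nlinarith [hkm, ha0]
  have hDdc : Dd = ((δ:ℝ) - a)^2 + 4 * (a * ((k:ℝ)*(m:ℝ) - ((n:ℝ)-1)*(δ:ℝ))) := by
    rw [hDd, ha]
    field_simp
    ring
  have hsqrt : 2 * X - ((δ:ℝ) - a) ≤ Real.sqrt Dd := by
    rcases hkey with hXδ | hq
    · have h1 : 2 * X - ((δ:ℝ) - a) ≤ (δ:ℝ) + a := by linarith
      have h2 : (δ:ℝ) + a = Real.sqrt (((δ:ℝ) + a)^2) := (Real.sqrt_sq (by positivity)).symm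
      calc 2 * X - ((δ:ℝ) - a) ≤ (δ:ℝ) + a := h1
        _ = Real.sqrt (((δ:ℝ) + a)^2) := h2
        _ ≤ Real.sqrt Dd := Real.sqrt_le_sqrt hDd0
    · have h1 : (2 * X - ((δ:ℝ) - a))^2 ≤ Dd := by
        rw [hDdc]
        nlinarith [hq]
      calc 2 * X - ((δ:ℝ) - a) ≤ |2 * X - ((δ:ℝ) - a)| := le_abs_self _
        _ = Real.sqrt ((2 * X - ((δ:ℝ) - a))^2) := (Real.sqrt_sq_eq_abs _).symm
        _ ≤ Real.sqrt Dd := Real.sqrt_le_sqrt h1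
  have hC2a : C2 = a * Kr := by
    rw [ha]
    field_simp
  have hBa : B = ((n:ℝ) - 1) * a := by
    apply mul_left_cancel₀ hKr0.ne'
    rw [hBid, hC2a]
    ring
  have hgoal1 : (δ:ℝ) - B + (((n:ℝ) - 2) / ((k:ℝ) - 1)) * C2 = (δ:ℝ) - a := by
    rw [hkK, hBa, hC2a]
    field_simp [hKr0.ne']
    ring
  have hgoal2 : ((δ:ℝ) + ((n:ℝ) / ((k:ℝ) - 1)) * C2 - B) ^ 2
      + (4 / ((k:ℝ) - 1)) * C2 * ((k:ℝ)*(m:ℝ) - (n:ℝ)*(δ:ℝ)) = Dd := by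
    rw [hkK, hDd, hBa, hC2a]
    field_simp [hKr0.ne']
    ring
  rw [hgoal2, hgoal1]
  linarith [hsqrt]
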